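/- Let A be a commutative ring of characteristic p (p prime). The map A → Ω¹_A / dA sending a to the class of a^{p-1} da modulo exact differentials is additive: the class of (a+b)^{p-1}d(a+b) equals the class of a^{p-1}da plus the class of b^{p-1}db. Explicitly, (a+b)^{p-1}d(a+b) − a^{p-1}da − b^{p-1}db = dc, where c ∈ A is obtained by evaluating at (a,b) the integer polynomial ((X+Y)^p − X^p − Y^p)/p ∈ Z[X,Y]. -/
import Mathlib

open MvPolynomial in
lemma aux_chain {A M : Type*} [CommRing A] [AddCommGroup M] [Module A M]
    (D : Derivation ℤ A M) {σ : Type*} [Fintype σ] [DecidableEq σ]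
    (v : σ → A) (P : MvPolynomial σ ℤ) :
    D (MvPolynomial.aeval v P) = ∑ i, MvPolynomial.aeval v (pderiv i P) • D (v i) := by
  induction P using MvPolynomial.induction_on with
  | C c =>
      simp [MvPolynomial.aeval_C, Derivation.map_algebraMap]
  | add P Q hP hQ =>
      simp [hP, hQ, Finset.sum_add_distrib, add_smul]
  | mul_X P i hP =>
      have key : ∀ j, (MvPolynomial.aeval v) (pderiv j (P * X i))
          = (MvPolynomial.aeval v) (pderiv j P) * v i
            + if j = i then (MvPolynomial.aeval v) P else 0 := by
        intro j
        rw [pderiv_mul, pderiv_X, map_add, map_mul, MvPolynomial.aeval_X]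
        congr 1
        rcases eq_or_ne j i with rfl | h
        · simp
        · simp [Pi.single_apply, Ne.symm h, h]
      rw [show (∑ j, MvPolynomial.aeval v (pderiv j (P * X i)) • D (v j))
          = ∑ j, ((MvPolynomial.aeval v (pderiv j P) * v i) • D (v j)
            + (if j = i then MvPolynomial.aeval v P else 0) • D (v j)) from
        Finset.sum_congr rfl fun j _ => by rw [key j, add_smul]]
      rw [Finset.sum_add_distrib]
      simp only [ite_smul, zero_smul, Finset.sum_ite_eq', Finset.mem_univ, if_true]
      rw [map_mul, MvPolynomial.aeval_X, Derivation.leibniz, hP, Finset.smul_sum, add_comm]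
      congr 1
      exact Finset.sum_congr rfl fun j _ => by rw [smul_smul, mul_comm]

open MvPolynomial in
/-- for a commutative ring `A` of characteristic `p`, the map
`a ↦ [a^{p-1} da] ∈ Ω¹_A/dA` is additive; explicitly
`(a+b)^{p-1}d(a+b) − a^{p-1}da − b^{p-1}db = dc` where `c` is the evaluation at `(a,b)`
of the integer polynomial `((X+Y)^p − X^p − Y^p)/p ∈ ℤ[X,Y]`. -/
theorem stmt_7 (p : ℕ) [Fact p.Prime] (k A : Type*) [CommRing k] [CommRing A]
    [Algebra k A] [CharP A p] (a b : A)
    (Q : MvPolynomial (Fin 2) ℤ)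
    (hQ : (p : ℤ) • Q = (X 0 + X 1) ^ p - X 0 ^ p - X 1 ^ p) :
    (a + b) ^ (p - 1) • KaehlerDifferential.D k A (a + b)
        - a ^ (p - 1) • KaehlerDifferential.D k A a
        - b ^ (p - 1) • KaehlerDifferential.D k A b
      = KaehlerDifferential.D k A (MvPolynomial.aeval ![a, b] Q) := by
  have hp : p ≠ 0 := (Fact.out : p.Prime).ne_zero
  have hpz : (p : ℤ) ≠ 0 := by exact_mod_cast hp
  have hpd : ∀ i : Fin 2, pderiv i Q = (X 0 + X 1) ^ (p - 1) - X i ^ (p - 1) := by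
    intro i
    have h : (p : ℤ) • pderiv i Q = pderiv i ((X 0 + X 1) ^ p - X 0 ^ p - X 1 ^ p) := by
      rw [← hQ, Derivation.map_smul]
    refine smul_right_injective (MvPolynomial (Fin 2) ℤ) hpz ?_
    show (p : ℤ) • pderiv i Q = (p : ℤ) • _
    rw [h]
    fin_cases i <;>
    · simp only [map_sub, map_add, Derivation.leibniz_pow, pderiv_X, Pi.single_apply]
      norm_num
      ring
  have hD : KaehlerDifferential.D k A (MvPolynomial.aeval ![a, b] Q)
      = ∑ i, MvPolynomial.aeval ![a, b] (pderiv i Q) •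
          KaehlerDifferential.D k A (![a, b] i) :=
    aux_chain ((KaehlerDifferential.D k A).restrictScalars ℤ) ![a, b] Q
  rw [hD, Fin.sum_univ_two]
  simp only [hpd, map_sub, map_add, map_pow, MvPolynomial.aeval_X,
    Matrix.cons_val_zero, Matrix.cons_val_one, Matrix.head_cons]
  simp only [sub_smul, smul_add]
  abel
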